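/- Idempotence is preserved by deriving: if a propagator p over Val' is idempotent (p(p(d')) = p(d') for every domain d' over Val'), then for every view φ the derived propagator φ̂(p) is idempotent: φ̂(p)(φ̂(p)(d)) = φ̂(p)(d) for every domain d over Val. -/
import Mathlib


namespace Stmt8

variable {Var Val Val' : Type*}

/-- A view applied to a domain (pointwise image). -/
def img (φ : Var → Val → Val') (d : Var → Set Val) : Var → Set Val' := fun x => φ x '' d x

/-- The inverse of a view applied to a domain (pointwise preimage). -/
def pre (φ : Var → Val → Val') (d : Var → Set Val') : Var → Set Val := fun x => φ x ⁻¹' d x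

/-- The derived propagator `φ̂(p) = φ⁻ ∘ p ∘ φ`. -/
def derived (φ : Var → Val → Val') (p : (Var → Set Val') → Var → Set Val')
    (d : Var → Set Val) : Var → Set Val := pre φ (p (img φ d))

/-- Idempotence is preserved by deriving: if a propagator `p` over `Val'` is idempotent, then
for every view `φ` the derived propagator `φ̂(p)` is idempotent. -/
theorem derived_idempotent (φ : Var → Val → Val')
    (hφ : ∀ x, Function.Injective (φ x))
    (p : (Var → Set Val') → Var → Set Val')
    (hcontr : ∀ d x, p d x ⊆ d x)
    (hmono : ∀ d' d : Var → Set Val', (∀ x, d' x ⊆ d x) → ∀ x, p d' x ⊆ p d x)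
    (hidem : ∀ d' : Var → Set Val', p (p d') = p d') :
    ∀ d : Var → Set Val, derived φ p (derived φ p d) = derived φ p d := by
  intro d
  have key : img φ (derived φ p d) = p (img φ d) := by
    funext x
    have h1 : p (img φ d) x ⊆ Set.range (φ x) :=
      (hcontr (img φ d) x).trans (Set.image_subset_range _ _)
    simp [img, derived, pre, Set.image_preimage_eq_inter_range,
      Set.inter_eq_left.mpr h1]
  show pre φ (p (img φ (derived φ p d))) = _
  rw [key, hidem]; rfl

end Stmt8
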